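/- Let 0 < φ < θ < π with θ ≠ π/2 and φ ≠ π/2, and let U = {1, e^{iθ}, e^{iφ}}. Then R(U) is a subring of ℂ if and only if the complex number tan θ/(tan θ − tan φ) + i·(tan φ · tan θ)/(tan θ − tan φ) is a quadratic integer, i.e., satisfies x² = λ·x + μ for some λ, μ ∈ ℤ. -/

import Mathlib

open Complex

/-- The bracket `[x,y] = x * conj y - y * conj x`. -/
noncomputable def brkt (x y : ℂ) : ℂ := x * (starRingEnd ℂ) y - y * (starRingEnd ℂ) x

/-- `lineInt α β p q` is the intersection point `I_{α,β}(p,q)` of the line through `p`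
with direction `α` and the line through `q` with direction `β` (for unit `α ≠ ±β`),
given by the formula of Buhler et al. -/
noncomputable def lineInt (α β p q : ℂ) : ℂ :=
  brkt α p / brkt α β * β + brkt β q / brkt β α * α

/-- The sets `S n` in the inductive construction. -/
def stepSet (U : Set ℂ) : ℕ → Set ℂ
  | 0 => {0, 1}
  | n + 1 => {z | ∃ α ∈ U, ∃ β ∈ U, α ≠ β ∧ α ≠ -β ∧
      ∃ p ∈ stepSet U n, ∃ q ∈ stepSet U n, z = lineInt α β p q}

/-- `RU U = ⋃ n, S n`. -/
def RU (U : Set ℂ) : Set ℂ := ⋃ n, stepSet U n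

/-- Elementary monomials of `U`. -/
def IsElem (U : Set ℂ) (z : ℂ) : Prop :=
  ∃ α ∈ U, ∃ β ∈ U, α ≠ β ∧ α ≠ -β ∧ z = lineInt α β 0 1

/-- Monomials of `U`, defined inductively. -/
inductive IsMonomial (U : Set ℂ) : ℂ → Prop
  | elementary (α β : ℂ) (hα : α ∈ U) (hβ : β ∈ U) (h1 : α ≠ β) (h2 : α ≠ -β) :
      IsMonomial U (lineInt α β 0 1)
  | step (α β m : ℂ) (hα : α ∈ U) (hβ : β ∈ U) (h1 : α ≠ β) (h2 : α ≠ -β)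
      (hm : IsMonomial U m) : IsMonomial U (lineInt α β 0 m)

/-- `P`: the real numbers arising as length-two monomials `I_{γ,δ}(0,z)` on the real axis. -/
def projSet (U : Set ℂ) : Set ℝ :=
  {r | ∃ γ ∈ U, ∃ δ ∈ U, γ ≠ δ ∧ γ ≠ -δ ∧ ∃ z, IsElem U z ∧ (r : ℂ) = lineInt γ δ 0 z}

/-- `m` is a `ℤ[P]`-linear combination of elementary monomials of `U`. -/
def IsZPComb (U : Set ℂ) (m : ℂ) : Prop :=
  ∃ (n : ℕ) (c : Fin n → ℝ) (z : Fin n → ℂ),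
    (∀ i, c i ∈ Subring.closure (projSet U)) ∧ (∀ i, IsElem U (z i)) ∧
    m = ∑ i, (c i : ℂ) * z i

noncomputable def Fm (α β p : ℂ) : ℂ := brkt α p / brkt α β * β

lemma lineInt_eq_Fm (α β p q : ℂ) : lineInt α β p q = Fm α β p + Fm β α q := rfl

lemma brkt_self (z : ℂ) : brkt z z = 0 := by simp [brkt]

lemma brkt_antisymm (α β : ℂ) : brkt β α = - brkt α β := by
  unfold brkt; ring

lemma brkt_lin (α : ℂ) (a b : ℤ) (p q : ℂ) :
    brkt α ((a:ℂ) * p + (b:ℂ) * q) = (a:ℂ) * brkt α p + (b:ℂ) * brkt α q := by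
  simp [brkt, map_add, map_mul, map_intCast]; ring

lemma Fm_lin (α β : ℂ) (a b : ℤ) (p q : ℂ) :
    Fm α β ((a:ℂ)*p + (b:ℂ)*q) = (a:ℂ) * Fm α β p + (b:ℂ) * Fm α β q := by
  unfold Fm; rw [brkt_lin]; ring

lemma brkt_formula (a b c d : ℝ) :
    brkt ((a:ℂ)+(b:ℂ)*I) ((c:ℂ)+(d:ℂ)*I) = 2*((b:ℂ)*(c:ℂ) - (a:ℂ)*(d:ℂ))*I := by
  simp [brkt, map_add, map_mul, Complex.conj_ofReal, Complex.conj_I]; ring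

lemma lineInt_self (α β p : ℂ) (h : brkt α β ≠ 0) : lineInt α β p p = p := by
  have key : brkt α p * β - brkt β p * α = brkt α β * p := by simp [brkt]; ring
  have h' : brkt β α ≠ 0 := by rw [brkt_antisymm]; simpa using h
  rw [lineInt, brkt_antisymm α β, div_neg, neg_mul, ← sub_eq_add_neg,
    div_mul_eq_mul_div, div_mul_eq_mul_div, div_sub_div_same, key, mul_comm,
    mul_div_assoc, div_self h, mul_one]

noncomputable def pt (p q : ℝ) : ℂ := (p:ℂ) + (q:ℂ)*I

lemma pt_one : pt 1 0 = 1 := by simp [pt]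

lemma brkt_pt (a b c d : ℝ) :
    brkt (pt a b) (pt c d) = 2*((b*c - a*d : ℝ):ℂ)*I := by
  unfold pt; rw [brkt_formula]; push_cast; ring

lemma Fm_eq_zero (α β p : ℂ) (h : brkt α p = 0) : Fm α β p = 0 := by
  simp [Fm, h]

lemma brkt_pt_X (a b c d : ℝ) (hW : b*c - a*d ≠ 0) :
    brkt (pt a b) (pt (b*c/(b*c-a*d)) (b*d/(b*c-a*d))) = 2*(b:ℂ)*I := by
  rw [brkt_pt]
  have : (b * (b*c/(b*c-a*d)) - a * (b*d/(b*c-a*d))) = b := by field_simp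
  rw [this]

lemma brkt_pt_X' (a b c d : ℝ) (hW : b*c - a*d ≠ 0) :
    brkt (pt c d) (pt (b*c/(b*c-a*d)) (b*d/(b*c-a*d))) = 0 := by
  rw [brkt_pt]
  have : (d * (b*c/(b*c-a*d)) - c * (b*d/(b*c-a*d))) = 0 := by field_simp; ring
  rw [this]; simp

lemma brkt_one_X (a b c d : ℝ) :
    brkt 1 (pt (b*c/(b*c-a*d)) (b*d/(b*c-a*d))) = 2*((-(b*d/(b*c-a*d)) : ℝ):ℂ)*I := by
  rw [← pt_one, brkt_pt]; norm_num

lemma Fm_u1_one (a b : ℝ) (hb : b ≠ 0) : Fm (pt a b) 1 1 = 1 := by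
  unfold Fm
  rw [← pt_one, brkt_pt]
  rw [div_self, one_mul, pt_one]
  simp [hb, Complex.I_ne_zero, sub_eq_zero]

noncomputable def ptX (a b c d : ℝ) : ℂ := pt (b*c/(b*c-a*d)) (b*d/(b*c-a*d))

lemma div2I (r w : ℝ) (hw : w ≠ 0) : (2*(r:ℂ)*I)/(2*(w:ℂ)*I) = ((r/w : ℝ):ℂ) := by
  have hw' : (w:ℂ) ≠ 0 := Complex.ofReal_ne_zero.mpr hw
  push_cast
  rw [div_eq_iff (by simp [hw', Complex.I_ne_zero] : 2*(w:ℂ)*I ≠ 0)]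
  field_simp

section evals
variable (a b c d : ℝ)

lemma Fm_1u_one (α : ℂ) : Fm 1 α 1 = 0 := Fm_eq_zero _ _ _ (brkt_self 1)

lemma Fm_uv_one (hW : b*c - a*d ≠ 0) :
    Fm (pt a b) (pt c d) 1 = ptX a b c d := by
  unfold Fm
  rw [← pt_one, brkt_pt, brkt_pt, div2I _ _ hW]
  unfold ptX pt
  have hW' : ((b*c - a*d : ℝ):ℂ) ≠ 0 := Complex.ofReal_ne_zero.mpr hW
  push_cast at hW' ⊢
  field_simp
  ring

lemma Fm_vu_one (hW : b*c - a*d ≠ 0) :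
    Fm (pt c d) (pt a b) 1 = 1 - ptX a b c d := by
  have hW2 : (d*a - c*b) ≠ 0 := by intro h; apply hW; linarith
  unfold Fm
  rw [← pt_one, brkt_pt, brkt_pt, div2I _ _ hW2]
  unfold ptX pt
  have hW' : ((b*c - a*d : ℝ):ℂ) ≠ 0 := Complex.ofReal_ne_zero.mpr hW
  have hW2' : ((d*a - c*b : ℝ):ℂ) ≠ 0 := Complex.ofReal_ne_zero.mpr hW2
  push_cast at hW' hW2' ⊢
  rw [show (d:ℂ)*a - c*b = -((b:ℂ)*c - a*d) by ring]
  set D : ℂ := (b:ℂ)*c - a*d with hD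
  field_simp
  rw [hD]
  ring

lemma Fm_1u_X (hb : b ≠ 0) (hW : b*c - a*d ≠ 0) :
    Fm 1 (pt a b) (ptX a b c d) = ptX a b c d - 1 := by
  have hb2 : (0*a - 1*b) ≠ 0 := by simpa using hb
  unfold Fm ptX
  rw [brkt_one_X, ← pt_one, brkt_pt, div2I _ _ hb2]
  unfold pt
  have hW' : ((b*c - a*d : ℝ):ℂ) ≠ 0 := Complex.ofReal_ne_zero.mpr hW
  have hb' : (b:ℂ) ≠ 0 := Complex.ofReal_ne_zero.mpr hb
  push_cast at hW' ⊢
  rw [show (0:ℂ)*a - 1*b = -(b:ℂ) by ring]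
  set D : ℂ := (b:ℂ)*c - a*d with hD
  field_simp
  rw [hD]
  ring

lemma Fm_1v_X (hd : d ≠ 0) (hW : b*c - a*d ≠ 0) :
    Fm 1 (pt c d) (ptX a b c d) = ptX a b c d := by
  have hd2 : (0*c - 1*d) ≠ 0 := by simpa using hd
  unfold Fm ptX
  rw [brkt_one_X, ← pt_one, brkt_pt, div2I _ _ hd2]
  unfold pt
  have hW' : ((b*c - a*d : ℝ):ℂ) ≠ 0 := Complex.ofReal_ne_zero.mpr hW
  have hd' : (d:ℂ) ≠ 0 := Complex.ofReal_ne_zero.mpr hd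
  push_cast at hW' ⊢
  rw [show (0:ℂ)*c - 1*d = -(d:ℂ) by ring]
  field_simp

lemma Fm_u1_X (hb : b ≠ 0) (hW : b*c - a*d ≠ 0) :
    Fm (pt a b) 1 (ptX a b c d) = 1 := by
  have hb2 : (b*1 - a*0) ≠ 0 := by simpa using hb
  unfold Fm ptX
  rw [brkt_pt_X _ _ _ _ hW, ← pt_one, brkt_pt, pt_one, mul_one]
  have : (2*(b:ℂ)*I) = 2*((b*1 - a*0 : ℝ):ℂ)*I := by push_cast; ring
  rw [this, div2I _ _ hb2]
  rw [div_self hb2]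
  norm_num

lemma Fm_v1_X (hW : b*c - a*d ≠ 0) :
    Fm (pt c d) 1 (ptX a b c d) = 0 :=
  Fm_eq_zero _ _ _ (brkt_pt_X' _ _ _ _ hW)

lemma Fm_uv_X (hb : b ≠ 0) (hW : b*c - a*d ≠ 0) :
    Fm (pt a b) (pt c d) (ptX a b c d) = ptX a b c d := by
  unfold Fm ptX
  rw [brkt_pt_X _ _ _ _ hW, brkt_pt]
  have : (2*(b:ℂ)*I) = 2*((b*1 - a*0 : ℝ):ℂ)*I := by push_cast; ring
  rw [this, div2I _ _ hW]
  unfold pt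
  have hW' : ((b*c - a*d : ℝ):ℂ) ≠ 0 := Complex.ofReal_ne_zero.mpr hW
  push_cast at hW' ⊢
  field_simp
  ring

lemma Fm_vu_X (hW : b*c - a*d ≠ 0) :
    Fm (pt c d) (pt a b) (ptX a b c d) = 0 :=
  Fm_eq_zero _ _ _ (brkt_pt_X' _ _ _ _ hW)

end evals

lemma pt_im (a b : ℝ) : (pt a b).im = b := by simp [pt]
lemma pt_re (a b : ℝ) : (pt a b).re = a := by simp [pt]

lemma lineInt_symm (α β p q : ℂ) : lineInt α β p q = lineInt β α q p := by
  unfold lineInt; ring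

lemma cos_ne_zero_of (θ : ℝ) (h0 : 0 < θ) (hπ : θ < Real.pi) (h2 : θ ≠ Real.pi / 2) :
    Real.cos θ ≠ 0 := by
  intro h
  obtain ⟨k, hk⟩ := Real.cos_eq_zero_iff.mp h
  have pipos := Real.pi_pos
  have h2θ : 2*θ = (2*(k:ℝ)+1) * Real.pi := by rw [hk]; ring
  have hk1 : (0:ℝ) < 2*(k:ℝ)+1 := by
    by_contra hle
    push_neg at hle
    nlinarith
  have hk2 : (2*(k:ℝ)+1) < 2 := by
    by_contra hle
    push_neg at hle
    nlinarith
  have hk0 : k = 0 := by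
    have a1 : (0:ℤ) < 2*k+1 := by exact_mod_cast hk1
    have a2 : (2*k+1 : ℤ) < 2 := by exact_mod_cast hk2
    omega
  apply h2
  rw [hk, hk0]
  push_cast
  ring

/-- for `0 < φ < θ < π` with `θ, φ ≠ π/2` and `U = {1, e^{iθ}, e^{iφ}}`,
`R(U)` is a subring of `ℂ` iff
`tan θ/(tan θ − tan φ) + i·(tan φ·tan θ)/(tan θ − tan φ)` is a quadratic integer. -/
theorem stmt8 (θ φ : ℝ) (h0 : 0 < φ) (hφθ : φ < θ) (hθπ : θ < Real.pi)
    (hθ2 : θ ≠ Real.pi / 2) (hφ2 : φ ≠ Real.pi / 2)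
    (x : ℂ)
    (hx : x = ((Real.tan θ / (Real.tan θ - Real.tan φ) : ℝ) : ℂ) +
      Complex.I * ((Real.tan φ * Real.tan θ / (Real.tan θ - Real.tan φ) : ℝ) : ℂ)) :
    (∃ A : Subring ℂ, (A : Set ℂ) =
        RU {1, Complex.exp ((θ : ℂ) * Complex.I), Complex.exp ((φ : ℂ) * Complex.I)}) ↔
      ∃ lam mu : ℤ, x ^ 2 = (lam : ℂ) * x + (mu : ℂ) := by
  have pipos := Real.pi_pos
  set ct := Real.cos θ with hct_def
  set st := Real.sin θ with hst_def
  set cp := Real.cos φ with hcp_def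
  set sp := Real.sin φ with hsp_def
  have hθ0 : 0 < θ := h0.trans hφθ
  have hφπ : φ < Real.pi := hφθ.trans hθπ
  have hst : 0 < st := Real.sin_pos_of_pos_of_lt_pi hθ0 hθπ
  have hsp : 0 < sp := Real.sin_pos_of_pos_of_lt_pi h0 hφπ
  have hct : ct ≠ 0 := cos_ne_zero_of θ hθ0 hθπ hθ2
  have hcp : cp ≠ 0 := cos_ne_zero_of φ h0 hφπ hφ2
  have hWsin : st*cp - ct*sp = Real.sin (θ - φ) := by rw [Real.sin_sub]
  have hW : 0 < st*cp - ct*sp := by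
    rw [hWsin]
    exact Real.sin_pos_of_pos_of_lt_pi (by linarith) (by linarith)
  have hWne : st*cp - ct*sp ≠ 0 := ne_of_gt hW
  -- directions
  have hu : Complex.exp ((θ:ℂ) * I) = pt ct st := by
    rw [Complex.exp_mul_I]
    simp [pt, hct_def, hst_def, Complex.ofReal_cos, Complex.ofReal_sin]
  have hv : Complex.exp ((φ:ℂ) * I) = pt cp sp := by
    rw [Complex.exp_mul_I]
    simp [pt, hcp_def, hsp_def, Complex.ofReal_cos, Complex.ofReal_sin]
  rw [hu, hv]
  set u := pt ct st with hu_def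
  set v := pt cp sp with hv_def
  set U : Set ℂ := {1, u, v} with hU_def
  -- x in ptX form
  have hD : Real.tan θ - Real.tan φ = (st*cp - ct*sp)/(ct*cp) := by
    rw [Real.tan_eq_sin_div_cos, Real.tan_eq_sin_div_cos]
    simp only [← hct_def, ← hst_def, ← hcp_def, ← hsp_def]
    field_simp
  have hx2 : x = ptX ct st cp sp := by
    have r1 : Real.tan θ / (Real.tan θ - Real.tan φ) = st*cp/(st*cp - ct*sp) := by
      rw [hD, Real.tan_eq_sin_div_cos]
      simp only [← hct_def, ← hst_def]
      field_simp
    have r2 : Real.tan φ * Real.tan θ / (Real.tan θ - Real.tan φ)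
        = st*sp/(st*cp - ct*sp) := by
      rw [hD, Real.tan_eq_sin_div_cos, Real.tan_eq_sin_div_cos]
      simp only [← hct_def, ← hst_def, ← hcp_def, ← hsp_def]
      field_simp
    rw [hx, r1, r2]
    unfold ptX pt
    ring
  -- distinctness
  have n1u : (1:ℂ) ≠ u := by
    intro h; have := congrArg Complex.im h; rw [hu_def, pt_im] at this
    simp at this; linarith
  have n1u' : (1:ℂ) ≠ -u := by
    intro h; have := congrArg Complex.im h; rw [hu_def] at this
    simp [pt] at this; linarith
  have n1v : (1:ℂ) ≠ v := by
    intro h; have := congrArg Complex.im h; rw [hv_def, pt_im] at this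
    simp at this; linarith
  have n1v' : (1:ℂ) ≠ -v := by
    intro h; have := congrArg Complex.im h; rw [hv_def] at this
    simp [pt] at this; linarith
  have nuv : u ≠ v := by
    intro h; have := congrArg Complex.re h; rw [hu_def, hv_def, pt_re, pt_re] at this
    have hlt : Real.cos θ < Real.cos φ :=
      Real.strictAntiOn_cos ⟨le_of_lt h0, le_of_lt hφπ⟩ ⟨le_of_lt hθ0, le_of_lt hθπ⟩ hφθ
    rw [← hct_def, ← hcp_def] at hlt
    linarith
  have nuv' : u ≠ -v := by
    intro h; have := congrArg Complex.im h; rw [hu_def, hv_def] at this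
    simp [pt] at this; linarith
  have nu1 : u ≠ 1 := n1u.symm
  have nu1' : u ≠ -1 := by
    intro h; have := congrArg Complex.im h; rw [hu_def] at this
    simp [pt] at this; linarith
  have nv1 : v ≠ 1 := n1v.symm
  have nv1' : v ≠ -1 := by
    intro h; have := congrArg Complex.im h; rw [hv_def] at this
    simp [pt] at this; linarith
  have nvu : v ≠ u := nuv.symm
  have nvu' : v ≠ -u := by
    intro h; have := congrArg Complex.im h; rw [hu_def, hv_def] at this
    simp [pt] at this; linarith
  -- memberships
  have m1 : (1:ℂ) ∈ U := by simp [hU_def]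
  have mu : u ∈ U := by simp [hU_def]
  have mv : v ∈ U := by simp [hU_def]
  -- E-lemmas
  have E1u : ∀ a b c d : ℤ, lineInt 1 u ((a:ℂ) + (b:ℂ)*x) ((c:ℂ) + (d:ℂ)*x)
      = ((c + d - b : ℤ):ℂ) + (b:ℂ)*x := by
    intro a b c d
    rw [lineInt_eq_Fm,
      (by ring : ((a:ℂ) + (b:ℂ)*x) = (a:ℂ)*1 + (b:ℂ)*x),
      (by ring : ((c:ℂ) + (d:ℂ)*x) = (c:ℂ)*1 + (d:ℂ)*x),
      Fm_lin, Fm_lin, Fm_1u_one, hx2, hu_def, Fm_1u_X ct st cp sp (ne_of_gt hst) hWne,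
      Fm_u1_one ct st (ne_of_gt hst), Fm_u1_X ct st cp sp (ne_of_gt hst) hWne]
    rw [← hx2]
    push_cast
    ring
  have E1v : ∀ a b c d : ℤ, lineInt 1 v ((a:ℂ) + (b:ℂ)*x) ((c:ℂ) + (d:ℂ)*x)
      = ((c : ℤ):ℂ) + (b:ℂ)*x := by
    intro a b c d
    rw [lineInt_eq_Fm,
      (by ring : ((a:ℂ) + (b:ℂ)*x) = (a:ℂ)*1 + (b:ℂ)*x),
      (by ring : ((c:ℂ) + (d:ℂ)*x) = (c:ℂ)*1 + (d:ℂ)*x),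
      Fm_lin, Fm_lin, Fm_1u_one, hx2, hv_def, Fm_1v_X ct st cp sp (ne_of_gt hsp) hWne,
      Fm_u1_one cp sp (ne_of_gt hsp), Fm_v1_X ct st cp sp hWne]
    rw [← hx2]
    push_cast
    ring
  have Euv : ∀ a b c d : ℤ, lineInt u v ((a:ℂ) + (b:ℂ)*x) ((c:ℂ) + (d:ℂ)*x)
      = ((c : ℤ):ℂ) + ((a + b - c : ℤ):ℂ)*x := by
    intro a b c d
    rw [lineInt_eq_Fm,
      (by ring : ((a:ℂ) + (b:ℂ)*x) = (a:ℂ)*1 + (b:ℂ)*x),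
      (by ring : ((c:ℂ) + (d:ℂ)*x) = (c:ℂ)*1 + (d:ℂ)*x),
      Fm_lin, Fm_lin, hx2, hu_def, hv_def,
      Fm_uv_one ct st cp sp hWne, Fm_uv_X ct st cp sp (ne_of_gt hst) hWne,
      Fm_vu_one ct st cp sp hWne, Fm_vu_X ct st cp sp hWne]
    rw [← hx2]
    push_cast
    ring
  -- forward inclusion  RU ⊆ M
  have forward : ∀ n, ∀ z ∈ stepSet U n, ∃ a b : ℤ, z = (a:ℂ) + (b:ℂ)*x := by
    intro n
    induction n with
    | zero =>
      intro z hz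
      rcases hz with h | h
      · exact ⟨0, 0, by rw [h]; push_cast; ring⟩
      · exact ⟨1, 0, by rw [h]; push_cast; ring⟩
    | succ n ih =>
      rintro z ⟨α, hα, β, hβ, hne, hne', p, hp, q, hq, rfl⟩
      obtain ⟨a, b, rfl⟩ := ih p hp
      obtain ⟨c, d, rfl⟩ := ih q hq
      rw [hU_def] at hα hβ
      simp only [Set.mem_insert_iff, Set.mem_singleton_iff] at hα hβ
      rcases hα with rfl | rfl | rfl <;> rcases hβ with rfl | rfl | rfl
      · exact absurd rfl hne
      · exact ⟨_, _, E1u a b c d⟩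
      · exact ⟨_, _, E1v a b c d⟩
      · exact ⟨_, _, by rw [lineInt_symm]; exact E1u c d a b⟩
      · exact absurd rfl hne
      · exact ⟨_, _, Euv a b c d⟩
      · exact ⟨_, _, by rw [lineInt_symm]; exact E1v c d a b⟩
      · exact ⟨_, _, by rw [lineInt_symm]; exact Euv c d a b⟩
      · exact absurd rfl hne
  -- monotonicity and closure
  have hbu1 : brkt u 1 ≠ 0 := by
    rw [hu_def, ← pt_one, brkt_pt]
    simp [Complex.I_ne_zero, sub_eq_zero]
    intro h
    push_cast at h
    nlinarith
  have mono : ∀ n, stepSet U n ⊆ stepSet U (n+1) := by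
    intro n p hp
    exact ⟨u, mu, 1, m1, nu1, nu1', p, hp, p, hp, (lineInt_self u 1 p hbu1).symm⟩
  have monoLe : ∀ {m n : ℕ}, m ≤ n → stepSet U m ⊆ stepSet U n := by
    intro m n h
    induction h with
    | refl => exact subset_rfl
    | step _ ih => exact ih.trans (mono _)
  have memRU : ∀ (n : ℕ) (z : ℂ), z ∈ stepSet U n → z ∈ RU U := by
    intro n z hz
    exact Set.mem_iUnion.mpr ⟨n, hz⟩
  have hstep : ∀ α β, α ∈ U → β ∈ U → α ≠ β → α ≠ -β →
      ∀ p q, p ∈ RU U → q ∈ RU U → lineInt α β p q ∈ RU U := by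
    intro α β hα hβ h1 h2 p q hp hq
    rw [RU, Set.mem_iUnion] at hp hq
    obtain ⟨m, hm⟩ := hp
    obtain ⟨n, hn⟩ := hq
    exact memRU (max m n + 1) _ ⟨α, hα, β, hβ, h1, h2, p,
      monoLe (Nat.le_max_left m n) hm, q, monoLe (Nat.le_max_right m n) hn, rfl⟩
  have h0' : (0:ℂ) ∈ RU U := memRU 0 0 (Or.inl rfl)
  have h1' : (1:ℂ) ∈ RU U := memRU 0 1 (Or.inr rfl)
  have hxmem : x ∈ RU U := by
    have e : lineInt u v 1 0 = x := by
      have := Euv 1 0 0 0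
      push_cast at this
      simpa using this
    rw [← e]
    exact hstep u v mu mv nuv nuv' 1 0 h1' h0'
  have hInt : ∀ a : ℤ, ((a:ℂ)) ∈ RU U := by
    have haux : ∀ a : ℤ, ((a:ℂ)) ∈ RU U → ((a:ℂ) + x) ∈ RU U := by
      intro a ha
      have e : lineInt 1 v x ((a:ℂ)) = (a:ℂ) + x := by
        have := E1v 0 1 a 0
        push_cast at this
        simpa using this
      rw [← e]
      exact hstep 1 v m1 mv n1v n1v' _ _ hxmem ha
    intro a
    induction a using Int.induction_on with
    | zero => simpa using h0'
    | succ i hi =>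
      have h1 : ((i:ℂ) + x) ∈ RU U := haux i (by exact_mod_cast hi)
      have e : lineInt 1 u 0 ((i:ℂ) + x) = ((i:ℤ) + 1 : ℂ) := by
        have := E1u 0 0 i 1
        push_cast at this
        simpa using this
      have : (((i:ℤ):ℂ) + 1) ∈ RU U := by
        rw [← e]
        exact hstep 1 u m1 mu n1u n1u' _ _ h0' h1
      push_cast
      exact_mod_cast this
    | pred i hi =>
      have hi' : (((-i : ℤ):ℂ)) ∈ RU U := by exact_mod_cast hi
      have e1 : lineInt 1 u x ((-i:ℤ):ℂ) = ((-i - 1 : ℤ):ℂ) + x := by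
        have := E1u 0 1 (-i) 0
        push_cast at this ⊢
        simpa using this
      have hs : (((-i - 1 : ℤ):ℂ) + x) ∈ RU U := by
        rw [← e1]
        exact hstep 1 u m1 mu n1u n1u' _ _ hxmem hi'
      have e2 : lineInt 1 v 1 (((-i - 1 : ℤ):ℂ) + x) = ((-i - 1 : ℤ):ℂ) := by
        have := E1v 1 0 (-i - 1) 1
        push_cast at this ⊢
        simpa using this
      have : (((-i - 1 : ℤ):ℂ)) ∈ RU U := by
        rw [← e2]
        exact hstep 1 v m1 mv n1v n1v' _ _ h1' hs
      push_cast at this ⊢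
      exact this
  have hall : ∀ a b : ℤ, ((a:ℂ) + (b:ℂ)*x) ∈ RU U := by
    intro a b
    have e : lineInt u v ((a + b : ℤ):ℂ) ((a:ℤ):ℂ) = (a:ℂ) + (b:ℂ)*x := by
      have := Euv (a+b) 0 a 0
      push_cast at this ⊢
      simpa using this
    rw [← e]
    exact hstep u v mu mv nuv nuv' _ _ (hInt (a+b)) (hInt a)
  have hRUM : RU U = {z : ℂ | ∃ a b : ℤ, z = (a:ℂ) + (b:ℂ)*x} := by
    ext z
    constructor
    · intro hz
      rw [RU, Set.mem_iUnion] at hz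
      obtain ⟨n, hn⟩ := hz
      exact forward n z hn
    · rintro ⟨a, b, rfl⟩
      exact hall a b
  have memM : ∀ w : ℂ, w ∈ RU U ↔ ∃ a b : ℤ, w = (a:ℂ) + (b:ℂ)*x := fun w =>
    Set.ext_iff.mp hRUM w
  constructor
  · rintro ⟨A, hA⟩
    have hxA : x ∈ A := by
      have h := hxmem
      rw [← hA] at h
      exact h
    have hxxA : x*x ∈ (A : Set ℂ) := SetLike.mem_coe.mpr (mul_mem hxA hxA)
    rw [hA] at hxxA
    obtain ⟨a, b, hab⟩ := (memM (x*x)).mp hxxA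
    exact ⟨b, a, by rw [sq, hab]; ring⟩
  · rintro ⟨lam, mu', hq⟩
    have addP : ∀ w z : ℂ, w ∈ RU U → z ∈ RU U → w + z ∈ RU U := by
      intro w z hw hz
      obtain ⟨a, b, rfl⟩ := (memM w).mp hw
      obtain ⟨c, d, rfl⟩ := (memM z).mp hz
      exact (memM _).mpr ⟨a + c, b + d, by push_cast; ring⟩
    have mulP : ∀ w z : ℂ, w ∈ RU U → z ∈ RU U → w * z ∈ RU U := by
      intro w z hw hz
      obtain ⟨a, b, rfl⟩ := (memM w).mp hw
      obtain ⟨c, d, rfl⟩ := (memM z).mp hz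
      exact (memM _).mpr ⟨a*c + b*d*mu', a*d + b*c + b*d*lam,
        by push_cast; linear_combination ((b:ℂ)*(d:ℂ))*hq⟩
    have negP : ∀ z : ℂ, z ∈ RU U → -z ∈ RU U := by
      intro z hz
      obtain ⟨a, b, rfl⟩ := (memM z).mp hz
      exact (memM _).mpr ⟨-a, -b, by push_cast; ring⟩
    exact ⟨{ carrier := RU U
             one_mem' := h1'
             zero_mem' := h0'
             add_mem' := fun hw hz => addP _ _ hw hz
             mul_mem' := fun hw hz => mulP _ _ hw hz
             neg_mem' := fun hz => negP _ hz }, rfl⟩
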